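/- For every F ∈ ℝ^{N×L} there exist p ≥ 1 and matrices W ∈ ℝ^{N×p}, H ∈ ℝ^{L×p} with F = W Hᵀ and (1/2)·( ‖W‖_F² + ‖H‖_F² ) = ‖F‖_*. Consequently, ‖F‖_* = min over all factorizations F = W Hᵀ of (1/2)·( ‖W‖_F² + ‖H‖_F² ). -/

import Mathlib

open Matrix

open scoped ComplexOrder in
/-- The positive semidefinite square root of a positive semidefinite matrix
(the definition `Matrix.PosSemidef.sqrt` of the older Mathlib, since removed). -/
noncomputable def Matrix.PosSemidef.sqrt {n 𝕜 : Type*} [Fintype n] [DecidableEq n] [RCLike 𝕜]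
    {A : Matrix n n 𝕜} (hA : A.PosSemidef) : Matrix n n 𝕜 :=
  hA.1.eigenvectorUnitary.1 * diagonal ((↑) ∘ (√·) ∘ hA.1.eigenvalues) *
    (star hA.1.eigenvectorUnitary : Matrix n n 𝕜)

/-- The nuclear norm of a real `N × L` matrix `F`: the trace of the positive semidefinite
square root of `Fᵀ F` (equivalently, the sum of the singular values of `F`). -/
noncomputable def nuclearNorm {N L : ℕ} (F : Matrix (Fin N) (Fin L) ℝ) : ℝ :=
  (Matrix.PosSemidef.sqrt (Matrix.posSemidef_conjTranspose_mul_self F)).trace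

/-- The squared Frobenius norm of a real matrix: the sum of the squares of its entries. -/
def frobSq {m n : ℕ} (A : Matrix (Fin m) (Fin n) ℝ) : ℝ :=
  ∑ i, ∑ j, (A i j) ^ 2

namespace NNaux

variable {N L : ℕ}

lemma frobSq_eq_trace {m n : ℕ} (A : Matrix (Fin m) (Fin n) ℝ) :
    frobSq A = (Aᵀ * A).trace := by
  simp only [frobSq, Matrix.trace, Matrix.diag, Matrix.mul_apply, Matrix.transpose_apply, sq]
  rw [Finset.sum_comm]

lemma frobSq_nonneg {m n : ℕ} (A : Matrix (Fin m) (Fin n) ℝ) : 0 ≤ frobSq A := by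
  unfold frobSq; positivity

noncomputable def μ (F : Matrix (Fin N) (Fin L) ℝ) : Fin L → ℝ :=
  (Matrix.posSemidef_conjTranspose_mul_self F).1.eigenvalues

noncomputable def V (F : Matrix (Fin N) (Fin L) ℝ) : Matrix (Fin L) (Fin L) ℝ :=
  ((Matrix.posSemidef_conjTranspose_mul_self F).1.eigenvectorUnitary : Matrix (Fin L) (Fin L) ℝ)

lemma μ_nonneg (F : Matrix (Fin N) (Fin L) ℝ) (j : Fin L) : 0 ≤ μ F j :=
  (Matrix.posSemidef_conjTranspose_mul_self F).eigenvalues_nonneg j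

lemma VtV (F : Matrix (Fin N) (Fin L) ℝ) : (V F)ᵀ * V F = 1 := by
  have h := Unitary.coe_star_mul_self
    ((Matrix.posSemidef_conjTranspose_mul_self F).1.eigenvectorUnitary)
  simpa [V, Matrix.star_eq_conjTranspose,
    Matrix.conjTranspose_eq_transpose_of_trivial] using h

lemma VVt (F : Matrix (Fin N) (Fin L) ℝ) : V F * (V F)ᵀ = 1 := by
  have h := Unitary.coe_mul_star_self
    ((Matrix.posSemidef_conjTranspose_mul_self F).1.eigenvectorUnitary)
  simpa [V, Matrix.star_eq_conjTranspose,
    Matrix.conjTranspose_eq_transpose_of_trivial] using h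

lemma diag_fact (F : Matrix (Fin N) (Fin L) ℝ) :
    (F * V F)ᵀ * (F * V F) = Matrix.diagonal (μ F) := by
  have h := (Matrix.posSemidef_conjTranspose_mul_self F).1.conjStarAlgAut_star_eigenvectorUnitary
  rw [Unitary.conjStarAlgAut_star_apply] at h
  simp only [Matrix.star_eq_conjTranspose, Matrix.conjTranspose_eq_transpose_of_trivial,
    RCLike.ofReal_real_eq_id, Function.comp_def, id_eq] at h
  simp only [V, μ, Matrix.transpose_mul, Matrix.mul_assoc] at h ⊢
  exact h

lemma nuclearNorm_eq (F : Matrix (Fin N) (Fin L) ℝ) :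
    nuclearNorm F = ∑ j, Real.sqrt (μ F j) := by
  unfold nuclearNorm Matrix.PosSemidef.sqrt
  rw [Matrix.trace_mul_cycle, Unitary.coe_star_mul_self, Matrix.one_mul, Matrix.trace_diagonal]
  simp [μ, RCLike.ofReal_real_eq_id]

end NNaux

namespace NNaux

variable {N L : ℕ}

lemma sum_sq_col (F : Matrix (Fin N) (Fin L) ℝ) (j : Fin L) :
    ∑ k, ((F * V F) k j) ^ 2 = μ F j := by
  have h := congrFun (congrFun (diag_fact F) j) j
  simpa [Matrix.mul_apply, Matrix.transpose_apply, sq, mul_comm] using h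

lemma col_zero (F : Matrix (Fin N) (Fin L) ℝ) (j : Fin L) (h : μ F j = 0) (i : Fin N) :
    (F * V F) i j = 0 := by
  have h2 : ∑ k, ((F * V F) k j) ^ 2 = 0 := (sum_sq_col F j).trans h
  have := (Finset.sum_eq_zero_iff_of_nonneg (fun k _ => sq_nonneg _)).mp h2 i (Finset.mem_univ i)
  exact (pow_eq_zero_iff two_ne_zero).mp this

lemma mul_diag_e (F : Matrix (Fin N) (Fin L) ℝ) :
    (F * V F) * Matrix.diagonal (fun j => if μ F j = 0 then (0:ℝ) else 1) = F * V F := by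
  ext i j
  rw [Matrix.mul_diagonal]
  by_cases h : μ F j = 0
  · simp [h, col_zero F j h i]
  · simp [h]

end NNaux

namespace NNaux

variable {N L : ℕ}

lemma exists_fact (F : Matrix (Fin N) (Fin L) ℝ) :
    ∃ (W : Matrix (Fin N) (Fin L) ℝ) (H : Matrix (Fin L) (Fin L) ℝ),
      F = W * Hᵀ ∧ (1 / 2) * (frobSq W + frobSq H) = nuclearNorm F := by
  set s4 : Fin L → ℝ := fun j => Real.sqrt (Real.sqrt (μ F j)) with hs4
  set t : Fin L → ℝ := fun j => if μ F j = 0 then 0 else (s4 j)⁻¹ with ht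
  have hs4pos : ∀ j, μ F j ≠ 0 → 0 < s4 j := by
    intro j h
    exact Real.sqrt_pos.mpr (Real.sqrt_pos.mpr (lt_of_le_of_ne (μ_nonneg F j) (Ne.symm h)))
  refine ⟨F * V F * Matrix.diagonal t, V F * Matrix.diagonal s4, ?_, ?_⟩
  · have hts : (fun j => t j * s4 j) = (fun j => if μ F j = 0 then (0:ℝ) else 1) := by
      funext j
      by_cases h : μ F j = 0
      · simp [ht, h]
      · simp [ht, h, inv_mul_cancel₀ (ne_of_gt (hs4pos j h))]
    calc F = F * V F * (V F)ᵀ := by rw [Matrix.mul_assoc, VVt, Matrix.mul_one]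
    _ = (F * V F) * Matrix.diagonal (fun j => if μ F j = 0 then (0:ℝ) else 1) * (V F)ᵀ := by
        rw [mul_diag_e]
    _ = (F * V F) * (Matrix.diagonal t * Matrix.diagonal s4) * (V F)ᵀ := by
        rw [Matrix.diagonal_mul_diagonal, hts]
    _ = F * V F * Matrix.diagonal t * (Matrix.diagonal s4 * (V F)ᵀ) := by
        simp only [Matrix.mul_assoc]
    _ = F * V F * Matrix.diagonal t * (V F * Matrix.diagonal s4)ᵀ := by
        rw [Matrix.transpose_mul, Matrix.diagonal_transpose]
  · have hH : frobSq (V F * Matrix.diagonal s4) = ∑ j, Real.sqrt (μ F j) := by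
      rw [frobSq_eq_trace, Matrix.transpose_mul, Matrix.diagonal_transpose]
      have : Matrix.diagonal s4 * (V F)ᵀ * (V F * Matrix.diagonal s4)
          = Matrix.diagonal (fun j => s4 j * s4 j) := by
        rw [Matrix.mul_assoc, ← Matrix.mul_assoc ((V F)ᵀ), VtV, Matrix.one_mul,
          Matrix.diagonal_mul_diagonal]
      rw [this, Matrix.trace_diagonal]
      exact Finset.sum_congr rfl fun j _ => Real.mul_self_sqrt (Real.sqrt_nonneg _)
    have hW : frobSq (F * V F * Matrix.diagonal t) = ∑ j, Real.sqrt (μ F j) := by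
      rw [frobSq_eq_trace, Matrix.transpose_mul, Matrix.diagonal_transpose]
      have h1 : Matrix.diagonal t * (F * V F)ᵀ * (F * V F * Matrix.diagonal t)
          = Matrix.diagonal (fun j => t j * μ F j * t j) := by
        rw [Matrix.mul_assoc, ← Matrix.mul_assoc ((F * V F)ᵀ), diag_fact,
          Matrix.diagonal_mul_diagonal, Matrix.diagonal_mul_diagonal]
        exact congrArg _ (funext fun j => by ring)
      rw [h1, Matrix.trace_diagonal]
      refine Finset.sum_congr rfl fun j _ => ?_
      by_cases h : μ F j = 0
      · simp [ht, h]
      · have h2 : s4 j * s4 j = Real.sqrt (μ F j) := Real.mul_self_sqrt (Real.sqrt_nonneg _)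
        have h3 : Real.sqrt (μ F j) * Real.sqrt (μ F j) = μ F j :=
          Real.mul_self_sqrt (μ_nonneg F j)
        have h4 : s4 j ≠ 0 := ne_of_gt (hs4pos j h)
        simp only [ht, if_neg h]
        field_simp
        nlinarith [h2, h3]
    rw [hH, hW, nuclearNorm_eq]
    ring

end NNaux

namespace NNaux

variable {N L : ℕ}

lemma lower (F : Matrix (Fin N) (Fin L) ℝ) (p : ℕ) (W : Matrix (Fin N) (Fin p) ℝ)
    (H : Matrix (Fin L) (Fin p) ℝ) (hF : F = W * Hᵀ) :
    nuclearNorm F ≤ (1 / 2) * (frobSq W + frobSq H) := by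
  set t : Fin L → ℝ := fun j => if μ F j = 0 then 0 else (Real.sqrt (μ F j))⁻¹ with ht
  set U' : Matrix (Fin N) (Fin L) ℝ := F * V F * Matrix.diagonal t with hU'
  have hsq : ∀ j, Real.sqrt (μ F j) * Real.sqrt (μ F j) = μ F j :=
    fun j => Real.mul_self_sqrt (μ_nonneg F j)
  have hsne : ∀ j, μ F j ≠ 0 → Real.sqrt (μ F j) ≠ 0 := by
    intro j h
    exact ne_of_gt (Real.sqrt_pos.mpr (lt_of_le_of_ne (μ_nonneg F j) (Ne.symm h)))
  -- U'ᵀ * (F * V F) = diagonal √μ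
  have hS : U'ᵀ * (F * V F) = Matrix.diagonal (fun j => Real.sqrt (μ F j)) := by
    rw [hU', Matrix.transpose_mul, Matrix.diagonal_transpose, Matrix.mul_assoc, diag_fact,
      Matrix.diagonal_mul_diagonal]
    refine congrArg _ (funext fun j => ?_)
    by_cases h : μ F j = 0
    · simp [ht, h]
    · rw [ht]
      simp only [if_neg h]
      field_simp
      rw [div_eq_iff (hsne j h), hsq]
  -- U'ᵀ * U' = diagonal e
  have hU'tU' : U'ᵀ * U' = Matrix.diagonal (fun j => if μ F j = 0 then (0:ℝ) else 1) := by
    rw [hU', Matrix.transpose_mul, Matrix.diagonal_transpose, Matrix.mul_assoc,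
      ← Matrix.mul_assoc ((F * V F)ᵀ), diag_fact, Matrix.diagonal_mul_diagonal,
      Matrix.diagonal_mul_diagonal]
    refine congrArg _ (funext fun j => ?_)
    by_cases h : μ F j = 0
    · simp [ht, h]
    · rw [ht]
      simp only [if_neg h]
      field_simp
      rw [sq, hsq]; exact div_self h
  -- U' * diagonal e = U'
  have hU'e : U' * Matrix.diagonal (fun j => if μ F j = 0 then (0:ℝ) else 1) = U' := by
    rw [hU', Matrix.mul_assoc, Matrix.diagonal_mul_diagonal]
    refine congrArg _ (congrArg _ (funext fun j => ?_))
    by_cases h : μ F j = 0 <;> simp [ht, h]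
  -- the idempotent projection P
  set P : Matrix (Fin N) (Fin N) ℝ := U' * U'ᵀ with hP
  have hPt : Pᵀ = P := by rw [hP, Matrix.transpose_mul, Matrix.transpose_transpose]
  have hPP : P * P = P := by
    rw [hP, Matrix.mul_assoc, ← Matrix.mul_assoc U'ᵀ, hU'tU', ← Matrix.mul_assoc, hU'e]
  set Q : Matrix (Fin N) (Fin N) ℝ := 1 - P with hQ
  have hQt : Qᵀ = Q := by rw [hQ, Matrix.transpose_sub, Matrix.transpose_one, hPt]
  have hQQ : Q * Q = Q := by
    simp [hQ, Matrix.mul_sub, Matrix.sub_mul, hPP]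
  -- A and B
  set A : Matrix (Fin p) (Fin L) ℝ := Wᵀ * U' with hA
  set B : Matrix (Fin p) (Fin L) ℝ := Hᵀ * V F with hB
  -- trace identity
  have htr : nuclearNorm F = Matrix.trace (Aᵀ * B) := by
    have h1 : Aᵀ * B = U'ᵀ * (F * V F) := by
      rw [hA, hB, Matrix.transpose_mul, Matrix.transpose_transpose, hF]
      simp only [Matrix.mul_assoc]
    rw [h1, hS, Matrix.trace_diagonal, nuclearNorm_eq]
  -- trace(AᵀB) ≤ (1/2)(frobSq A + frobSq B)
  have hbound : Matrix.trace (Aᵀ * B) ≤ (1 / 2) * (frobSq A + frobSq B) := by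
    have expand : Matrix.trace (Aᵀ * B) = ∑ j, ∑ k, A k j * B k j := by
      simp [Matrix.trace, Matrix.diag, Matrix.mul_apply, Matrix.transpose_apply]
    rw [expand, frobSq_eq_trace, frobSq_eq_trace]
    have eA : Matrix.trace (Aᵀ * A) = ∑ j, ∑ k, A k j ^ 2 := by
      simp [Matrix.trace, Matrix.diag, Matrix.mul_apply, Matrix.transpose_apply, sq]
    have eB : Matrix.trace (Bᵀ * B) = ∑ j, ∑ k, B k j ^ 2 := by
      simp [Matrix.trace, Matrix.diag, Matrix.mul_apply, Matrix.transpose_apply, sq]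
    rw [eA, eB, ← Finset.sum_add_distrib, Finset.mul_sum]
    refine Finset.sum_le_sum fun j _ => ?_
    rw [← Finset.sum_add_distrib, Finset.mul_sum]
    refine Finset.sum_le_sum fun k _ => ?_
    nlinarith [sq_nonneg (A k j - B k j)]
  -- frobSq B = frobSq H
  have hfB : frobSq B = frobSq H := by
    rw [frobSq_eq_trace, frobSq_eq_trace, hB, Matrix.transpose_mul, Matrix.transpose_transpose,
      Matrix.mul_assoc, Matrix.trace_mul_comm]
    have e : Hᵀ * V F * (V F)ᵀ = Hᵀ := by rw [Matrix.mul_assoc, VVt, Matrix.mul_one]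
    rw [Matrix.mul_assoc H, e, Matrix.trace_mul_comm]
  -- frobSq A ≤ frobSq W
  have hfA : frobSq A ≤ frobSq W := by
    have key : frobSq A + frobSq (Q * W) = frobSq W := by
      rw [frobSq_eq_trace, frobSq_eq_trace, frobSq_eq_trace]
      have e1 : Aᵀ * A = U'ᵀ * (W * (Wᵀ * U')) := by
        rw [hA, Matrix.transpose_mul, Matrix.transpose_transpose]
        simp only [Matrix.mul_assoc]
      have e2 : (Q * W)ᵀ * (Q * W) = Wᵀ * (Q * W) := by
        rw [Matrix.transpose_mul, hQt, Matrix.mul_assoc, ← Matrix.mul_assoc Q, hQQ]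
      rw [e1, e2, Matrix.trace_mul_comm (U'ᵀ) (W * (Wᵀ * U'))]
      have e3 : W * (Wᵀ * U') * U'ᵀ = Wᵀᵀ * (Wᵀ * P) := by
        rw [hP]
        simp only [Matrix.transpose_transpose, Matrix.mul_assoc]
      rw [e3, Matrix.trace_mul_comm (Wᵀᵀ) (Wᵀ * P), Matrix.mul_assoc, ← Matrix.trace_add]
      have e4 : Wᵀ * (P * Wᵀᵀ) + Wᵀ * (Q * W) = Wᵀ * W := by
        rw [Matrix.transpose_transpose, ← Matrix.mul_add]
        rw [hQ, Matrix.sub_mul, Matrix.one_mul]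
        rw [add_sub_cancel]
      rw [e4]
    nlinarith [frobSq_nonneg (Q * W), key]
  calc nuclearNorm F = Matrix.trace (Aᵀ * B) := htr
    _ ≤ (1 / 2) * (frobSq A + frobSq B) := hbound
    _ ≤ (1 / 2) * (frobSq W + frobSq H) := by nlinarith [hfA, hfB.le, hfB.ge]

end NNaux

/-- For every `F ∈ ℝ^{N×L}` there exist `p ≥ 1` and matrices `W ∈ ℝ^{N×p}`,
`H ∈ ℝ^{L×p}` with `F = W Hᵀ` and `(1/2)(‖W‖_F² + ‖H‖_F²) = ‖F‖_*`.  Consequently,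
`‖F‖_*` is the minimum of `(1/2)(‖W‖_F² + ‖H‖_F²)` over all factorizations `F = W Hᵀ`. -/
theorem nuclearNorm_eq_min_factorization {N L : ℕ} (F : Matrix (Fin N) (Fin L) ℝ) :
    (∃ p : ℕ, 1 ≤ p ∧ ∃ (W : Matrix (Fin N) (Fin p) ℝ) (H : Matrix (Fin L) (Fin p) ℝ),
      F = W * Hᵀ ∧ (1 / 2) * (frobSq W + frobSq H) = nuclearNorm F) ∧
    IsLeast {x : ℝ | ∃ (p : ℕ) (W : Matrix (Fin N) (Fin p) ℝ) (H : Matrix (Fin L) (Fin p) ℝ),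
      F = W * Hᵀ ∧ x = (1 / 2) * (frobSq W + frobSq H)} (nuclearNorm F) := by
  obtain ⟨W, H, h1, h2⟩ := NNaux.exists_fact F
  constructor
  · rcases Nat.eq_zero_or_pos L with hL | hL
    · subst hL
      refine ⟨1, le_refl 1, 0, 0, ?_, ?_⟩
      · ext i j; exact j.elim0
      · have : nuclearNorm F = 0 := by
          rw [NNaux.nuclearNorm_eq]; simp
        simp [this, frobSq]
    · exact ⟨L, hL, W, H, h1, h2⟩
  · constructor
    · exact ⟨L, W, H, h1, h2.symm⟩
    · rintro x ⟨p, W', H', hF, rfl⟩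
      exact NNaux.lower F p W' H' hF
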